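/- Let b_4 : ℕ → {0,1,2,3} be the fixed point starting with 0 of the morphism 0 ↦ 01, 1 ↦ 21, 2 ↦ 03, 3 ↦ 23, and let g_3 be the 4-uniform morphism from {0,1,2,3}* to {0,1,2}* defined by g_3(0) = 0010, g_3(1) = 1122, g_3(2) = 0200, g_3(3) = 1212. Then the infinite ternary word g_3(b_4) avoids every circular formula C_i with i ≥ 3. -/

import Mathlib

/-- `u` is a factor of the infinite word `x`. -/
def IsFactorOfInf {α : Type*} (u : List α) (x : ℕ → α) : Prop :=
  ∃ i : ℕ, u = (List.range u.length).map fun j => x (i + j)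

/-- The `i`-th fragment `A_i A_{i+1} … A_{i+t}` of the circular formula `C_t`,
as the list of variable indices (taken modulo `t`), of length `t + 1`. -/
def circFragment (t i : ℕ) : List ℕ :=
  (List.range (t + 1)).map fun j => (i + j) % t

/-- `h` is an occurrence of the circular formula `C_t` in the infinite word `x`:
`h` assigns a nonempty word to each of the `t` variables, and the `h`-image of
every fragment of `C_t` is a factor of `x`. -/
def CircOcc {α : Type*} (t : ℕ) (h : ℕ → List α) (x : ℕ → α) : Prop :=
  (∀ v < t, h v ≠ []) ∧ ∀ i < t, IsFactorOfInf ((circFragment t i).flatMap h) x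

/-- The morphism `0 ↦ 01, 1 ↦ 21, 2 ↦ 03, 3 ↦ 23` whose fixed point
starting with `0` is `b₄`. -/
def mb4 : Fin 4 → List (Fin 4) := ![[0, 1], [2, 1], [0, 3], [2, 3]]

/-- The 4-uniform morphism `g₃ : {0,1,2,3}* → {0,1,2}*`. -/
def g3 : Fin 4 → List (Fin 3) :=
  ![[0, 0, 1, 0], [1, 1, 2, 2], [0, 2, 0, 0], [1, 2, 1, 2]]

set_option linter.unusedVariables false
set_option linter.unreachableTactic false
set_option linter.unusedTactic false
set_option linter.unusedSectionVars false

def win {α : Type*} (Y : ℕ → α) (r L : ℕ) : List α :=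
  (List.range L).map fun j => Y (r + j)

lemma map_range_eq_iff {α : Type*} {f g : ℕ → α} {L : ℕ} :
    (List.range L).map f = (List.range L).map g ↔ ∀ j < L, f j = g j := by
  constructor
  · intro h j hj
    have := congrArg (fun l => l[j]?) h
    simpa [List.getElem?_map, List.getElem?_range, hj] using this
  · intro h
    exact List.map_congr_left (fun a ha => h a (List.mem_range.mp ha))

lemma factor_win_iff {α : Type*} {Y x : ℕ → α} {r L : ℕ} :
    IsFactorOfInf (win Y r L) x ↔ ∃ n, ∀ j < L, Y (r + j) = x (n + j) := by
  unfold IsFactorOfInf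
  have hlen : (win Y r L).length = L := by simp [win]
  rw [hlen]
  unfold win
  constructor
  · rintro ⟨n, hn⟩
    exact ⟨n, map_range_eq_iff.mp hn⟩
  · rintro ⟨n, hn⟩
    exact ⟨n, map_range_eq_iff.mpr hn⟩

lemma per_mod {α : Type*} {Y : ℕ → α} {p : ℕ} (hp : 0 < p)
    (hY : ∀ n, Y (n + p) = Y n) : ∀ n, Y n = Y (n % p) := by
  intro n
  induction n using Nat.strong_induction_on with
  | _ n IH =>
    rcases lt_or_ge n p with h | h
    · rw [Nat.mod_eq_of_lt h]
    · have h1 : n - p + p = n := by omega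
      have h2 : Y (n - p) = Y ((n - p) % p) := IH (n - p) (by omega)
      rw [← h1, hY, h2, Nat.add_mod_right]

lemma flatMap_map' {α : Type*} (l : List ℕ) (f : ℕ → ℕ) (g : ℕ → List α) :
    (l.map f).flatMap g = l.flatMap (fun a => g (f a)) := by
  induction l with
  | nil => simp
  | cons a l IH => simp [IH]

lemma claimA {x : ℕ → Fin 3} {t : ℕ} (ht : 3 ≤ t) (h : ℕ → List (Fin 3))
    (hocc : CircOcc t h x) :
    ∃ p, 3 ≤ p ∧ ∃ Y : ℕ → Fin 3, (∀ n, Y (n + p) = Y n) ∧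
      ∀ r, IsFactorOfInf (win Y r (p + 1)) x := by
  classical
  obtain ⟨hne, hfrag⟩ := hocc
  have ht0 : 0 < t := by omega
  set B : ℕ → List (Fin 3) := fun m => (List.range m).flatMap (fun k => h (k % t)) with hB
  set s : ℕ → ℕ := fun m => (B m).length with hs
  set Y : ℕ → Fin 3 := fun n => (B (n + 1)).getD n 0 with hY
  have hB1 : ∀ m, B (m + 1) = B m ++ h (m % t) := by
    intro m; simp [hB, List.range_succ]
  have hmono : ∀ m, s m < s (m + 1) := by
    intro m
    have : h (m % t) ≠ [] := hne _ (Nat.mod_lt _ ht0)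
    have hpos : 0 < (h (m % t)).length := List.length_pos_iff.mpr this
    have : s (m + 1) = s m + (h (m % t)).length := by simp [hs, hB1 m]
    omega
  have hlen : ∀ m, m ≤ s m := by
    intro m
    induction m with
    | zero => simp
    | succ m IH => have := hmono m; omega
  -- addition decomposition
  have hBadd : ∀ a b, B (a + b) = B a ++ (List.range b).flatMap (fun j => h ((a + j) % t)) := by
    intro a b
    simp only [hB, List.range_add, List.flatMap_append, flatMap_map']
  -- shift lemma
  have hshift : ∀ m, B (t + m) = B t ++ B m := by
    intro m
    rw [hBadd t m]
    congr 1
    apply List.flatMap_congr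
    intro k _
    rw [Nat.add_mod_left]
  have hsshift : ∀ m, s (t + m) = s t + s m := by
    intro m; simp [hs, hshift m]
  -- prefix property
  have hpre : ∀ m m', m ≤ m' → ∃ rst, B m' = B m ++ rst := by
    intro m m' hm
    induction m' with
    | zero => exact ⟨[], by simp [show m = 0 by omega]⟩
    | succ m' IH =>
      rcases Nat.lt_or_ge m (m' + 1) with hlt | hge
      · obtain ⟨rst, hrst⟩ := IH (by omega)
        exact ⟨rst ++ h (m' % t), by rw [hB1, hrst, List.append_assoc]⟩
      · exact ⟨[], by simp [show m = m' + 1 by omega]⟩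
  -- stability: for n < s m, (B m).getD n 0 = Y n
  have hstab : ∀ m n, n < s m → (B m).getD n 0 = Y n := by
    intro m n hn
    obtain ⟨rst, hrst⟩ := hpre (n + 1) (max m (n + 1)) (le_max_right _ _)
    obtain ⟨rst', hrst'⟩ := hpre m (max m (n + 1)) (le_max_left _ _)
    have h1 : (B (max m (n + 1))).getD n 0 = (B (n + 1)).getD n 0 := by
      rw [hrst]
      exact List.getD_append _ _ _ _ (lt_of_lt_of_le (Nat.lt_of_lt_of_le (Nat.lt_succ_self n) (hlen (n+1))) (le_refl _))
    have h2 : (B (max m (n + 1))).getD n 0 = (B m).getD n 0 := by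
      rw [hrst']
      exact List.getD_append _ _ _ _ hn
    rw [← h2, h1]
  -- periodicity
  have hper : ∀ n, Y (n + s t) = Y n := by
    intro n
    have hn1 : n < s (n + 1) := lt_of_lt_of_le (Nat.lt_succ_self n) (hlen (n + 1))
    have hlt : n + s t < s (t + (n + 1)) := by rw [hsshift]; omega
    have e1 : Y (n + s t) = (B (t + (n + 1))).getD (n + s t) 0 := (hstab _ _ hlt).symm
    rw [e1, hshift, Nat.add_comm n (s t), List.getD_append_right _ _ _ _ (by simp [hs])]
    have h3 : s t + n - (B t).length = n := by simp [hs]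
    rw [h3]
  -- fragment decomposition : B (i + (t+1)) = B i ++ fragment_i
  have hfragdec : ∀ i, B (i + (t + 1)) = B i ++ (circFragment t i).flatMap h := by
    intro i
    rw [hBadd i (t + 1)]
    congr 1
    rw [circFragment, flatMap_map']
  -- every shifted fragment is a factor
  have hfragfact : ∀ i, IsFactorOfInf ((circFragment t i).flatMap h) x := by
    intro i
    have : circFragment t i = circFragment t (i % t) := by
      unfold circFragment
      apply List.map_congr_left
      intro j _
      rw [Nat.mod_add_mod]
    rw [this]
    exact hfrag _ (Nat.mod_lt _ ht0)
  -- locate r between s i and s (i+1)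
  have hloc : ∀ r, ∃ i, s i ≤ r ∧ r < s (i + 1) := by
    intro r
    induction r with
    | zero => exact ⟨0, by simp [hs, hB], by have := hmono 0; omega⟩
    | succ r IH =>
      obtain ⟨i, h1, h2⟩ := IH
      rcases Nat.lt_or_ge (r + 1) (s (i + 1)) with hlt | hge
      · exact ⟨i, by omega, hlt⟩
      · exact ⟨i + 1, by omega, by have := hmono (i + 1); omega⟩
  refine ⟨s t, le_trans ht (hlen t), Y, hper, ?_⟩
  intro r
  obtain ⟨i, hi1, hi2⟩ := hloc r
  -- fragment i as factor, with occurrence n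
  obtain ⟨n, hn⟩ := hfragfact i
  set F : List (Fin 3) := (circFragment t i).flatMap h with hF
  have hFlen : s (i + (t + 1)) = s i + F.length := by
    show (B (i + (t + 1))).length = (B i).length + F.length
    rw [hfragdec i, List.length_append]
  have hFget : ∀ j < F.length, Y (s i + j) = x (n + j) := by
    intro j hj
    have e1 : Y (s i + j) = (B (i + (t + 1))).getD (s i + j) 0 :=
      (hstab _ _ (by omega)).symm
    rw [e1, hfragdec i, List.getD_append_right _ _ _ _ (by simp [hs])]
    have : s i + j - (B i).length = j := by simp [hs]
    rw [this]
    have := congrArg (fun l => l.getD j 0) hn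
    rw [this]
    have : j < ((List.range F.length).map fun j => x (n + j)).length := by simpa using hj
    rw [List.getD_eq_getElem _ _ this]
    simp
  -- window bound : r + s t + 1 ≤ s i + F.length
  have hbound : r + s t + 1 ≤ s i + F.length := by
    rw [← hFlen]
    have : i + (t + 1) = t + (i + 1) := by omega
    rw [this, hsshift]
    omega
  rw [factor_win_iff]
  refine ⟨n + (r - s i), ?_⟩
  intro j hj
  have e : r + j = s i + ((r - s i) + j) := by omega
  rw [e, hFget _ (by omega), Nat.add_assoc]


/-- The infinite word g3(b4). -/
def xw (b4 : ℕ → Fin 4) : ℕ → Fin 3 := fun n => (g3 (b4 (n / 4))).getD (n % 4) 0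

/-- The template : value of x at position with given residue mod 16;
`c` is the choice bit of the odd block involved. -/
def T : ℕ → Bool → Fin 3 := fun r c =>
  [0, 0, 1, 0, 1, cond c 2 1, cond c 1 2, 2,
   0, 2, 0, 0, 1, cond c 2 1, cond c 1 2, 2].getD r 0

lemma fin4cases (v : Fin 4) : v = 0 ∨ v = 1 ∨ v = 2 ∨ v = 3 := by
  fin_cases v <;> simp

section B4
variable {b4 : ℕ → Fin 4} (hfix : ∀ n, [b4 (2 * n), b4 (2 * n + 1)] = mb4 (b4 n))
include hfix

lemma b4ev (n : ℕ) : b4 (2 * n) = (mb4 (b4 n)).getD 0 0 := by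
  have := congrArg (fun l => l.getD 0 0) (hfix n)
  simpa using this

lemma b4od (n : ℕ) : b4 (2 * n + 1) = (mb4 (b4 n)).getD 1 0 := by
  have := congrArg (fun l => l.getD 1 0) (hfix n)
  simpa using this

lemma b4parity (n : ℕ) : (b4 n).val % 2 = n % 2 := by
  obtain ⟨k, rfl | rfl⟩ := Nat.even_or_odd' n
  · rw [b4ev hfix k]
    rcases fin4cases (b4 k) with h | h | h | h <;> rw [h] <;> simp [mb4] <;> omega
  · rw [b4od hfix k]
    rcases fin4cases (b4 k) with h | h | h | h <;> rw [h] <;> simp [mb4] <;> omega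

lemma b4even (k : ℕ) : b4 (2 * k) = if k % 2 = 0 then 0 else 2 := by
  have hp := b4parity hfix k
  rw [b4ev hfix k]
  rcases fin4cases (b4 k) with h | h | h | h <;> rw [h] at hp ⊢ <;> simp [mb4] at hp ⊢
  · omega
  · omega
  · omega
  · omega

/-- choice bit of odd block k -/
def cfun (b4 : ℕ → Fin 4) (k : ℕ) : Bool := decide (b4 (2 * k + 1) = 3)

lemma b4odd (k : ℕ) : b4 (2 * k + 1) = cond (cfun b4 k) 3 1 := by
  have hp := b4parity hfix (2 * k + 1)
  rcases fin4cases (b4 (2 * k + 1)) with h | h | h | h <;> rw [h] at hp ⊢ <;>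
      simp [cfun, h] <;> simp at hp <;> omega

omit hfix in
lemma xval (a δ : ℕ) (hδ : δ < 4) :
    xw b4 (4 * a + δ) = (g3 (b4 a)).getD δ 0 := by
  have h1 : (4 * a + δ) / 4 = a := by omega
  have h2 : (4 * a + δ) % 4 = δ := by omega
  unfold xw
  rw [h1, h2]

/-- The master template lemma. -/
lemma master (s : ℕ) : xw b4 s = T (s % 16) (cfun b4 (s / 8)) := by
  obtain ⟨k, r, hr, rfl⟩ : ∃ k r, r < 8 ∧ s = 8 * k + r :=
    ⟨s / 8, s % 8, Nat.mod_lt _ (by omega), by omega⟩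
  have hdiv : (8 * k + r) / 8 = k := by omega
  have hmod : (8 * k + r) % 16 = 8 * (k % 2) + r := by omega
  rw [hdiv, hmod]
  have hce : cond (cfun b4 k) (3 : Fin 4) 1 = b4 (2 * k + 1) := (b4odd hfix k).symm
  have hbe := b4even hfix k
  rcases Nat.even_or_odd k with ⟨u, hu⟩ | ⟨u, hu⟩
  · have hk2 : k % 2 = 0 := by omega
    rw [hk2] at hmod ⊢
    have hb : b4 (2 * k) = 0 := by rw [hbe, if_pos hk2]
    interval_cases r
    · rw [show 8 * k + 0 = 4 * (2 * k) + 0 by ring, xval (2 * k) 0 (by norm_num), hb]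
      cases cfun b4 k <;> simp [g3, T]
    · rw [show 8 * k + 1 = 4 * (2 * k) + 1 by ring, xval (2 * k) 1 (by norm_num), hb]
      cases cfun b4 k <;> simp [g3, T]
    · rw [show 8 * k + 2 = 4 * (2 * k) + 2 by ring, xval (2 * k) 2 (by norm_num), hb]
      cases cfun b4 k <;> simp [g3, T]
    · rw [show 8 * k + 3 = 4 * (2 * k) + 3 by ring, xval (2 * k) 3 (by norm_num), hb]
      cases cfun b4 k <;> simp [g3, T]
    · rw [show 8 * k + 4 = 4 * (2 * k + 1) + 0 by ring, xval (2 * k + 1) 0 (by norm_num), ← hce]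
      cases cfun b4 k <;> simp [g3, T]
    · rw [show 8 * k + 5 = 4 * (2 * k + 1) + 1 by ring, xval (2 * k + 1) 1 (by norm_num), ← hce]
      cases cfun b4 k <;> simp [g3, T]
    · rw [show 8 * k + 6 = 4 * (2 * k + 1) + 2 by ring, xval (2 * k + 1) 2 (by norm_num), ← hce]
      cases cfun b4 k <;> simp [g3, T]
    · rw [show 8 * k + 7 = 4 * (2 * k + 1) + 3 by ring, xval (2 * k + 1) 3 (by norm_num), ← hce]
      cases cfun b4 k <;> simp [g3, T]
  · have hk2 : k % 2 = 1 := by omega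
    rw [hk2] at hmod ⊢
    have hb : b4 (2 * k) = 2 := by rw [hbe, if_neg (by omega)]
    interval_cases r
    · rw [show 8 * k + 0 = 4 * (2 * k) + 0 by ring, xval (2 * k) 0 (by norm_num), hb]
      cases cfun b4 k <;> simp [g3, T]
    · rw [show 8 * k + 1 = 4 * (2 * k) + 1 by ring, xval (2 * k) 1 (by norm_num), hb]
      cases cfun b4 k <;> simp [g3, T]
    · rw [show 8 * k + 2 = 4 * (2 * k) + 2 by ring, xval (2 * k) 2 (by norm_num), hb]
      cases cfun b4 k <;> simp [g3, T]
    · rw [show 8 * k + 3 = 4 * (2 * k) + 3 by ring, xval (2 * k) 3 (by norm_num), hb]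
      cases cfun b4 k <;> simp [g3, T]
    · rw [show 8 * k + 4 = 4 * (2 * k + 1) + 0 by ring, xval (2 * k + 1) 0 (by norm_num), ← hce]
      cases cfun b4 k <;> simp [g3, T]
    · rw [show 8 * k + 5 = 4 * (2 * k + 1) + 1 by ring, xval (2 * k + 1) 1 (by norm_num), ← hce]
      cases cfun b4 k <;> simp [g3, T]
    · rw [show 8 * k + 6 = 4 * (2 * k + 1) + 2 by ring, xval (2 * k + 1) 2 (by norm_num), ← hce]
      cases cfun b4 k <;> simp [g3, T]
    · rw [show 8 * k + 7 = 4 * (2 * k + 1) + 3 by ring, xval (2 * k + 1) 3 (by norm_num), ← hce]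
      cases cfun b4 k <;> simp [g3, T]

end B4


section C3
variable {b4 : ℕ → Fin 4}
  (hmaster : ∀ s : ℕ, xw b4 s = T (s % 16) (cfun b4 (s / 8)))
include hmaster

omit hmaster in
lemma mod16_add (n j : ℕ) : (n + j) % 16 = (n % 16 + j) % 16 := by omega

omit hmaster in
lemma div8_decomp (n j : ℕ) (hj : j < 8) :
    (n + j) / 8 = 2 * (n / 16) + (n % 16 + j) / 8 := by omega

/-- marker characterization: x n = 0, x(n+1) = 1, x(n+2) ≠ 0  ↔  n ≡ 3 mod 8 -/
lemma markerBwd (n : ℕ) (hn : n % 8 = 3) :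
    xw b4 n = 0 ∧ xw b4 (n + 1) = 1 ∧ xw b4 (n + 2) ≠ 0 := by
  have h0 := hmaster n
  have h1 := hmaster (n + 1)
  have h2 := hmaster (n + 2)
  have hr : n % 16 = 3 ∨ n % 16 = 11 := by omega
  rcases hr with hr | hr
  · have e1 : (n + 1) % 16 = 4 := by omega
    have e2 : (n + 2) % 16 = 5 := by omega
    rw [hr] at h0; rw [e1] at h1; rw [e2] at h2
    refine ⟨?_, ?_, ?_⟩
    · rw [h0]; cases cfun b4 (n / 8) <;> rfl
    · rw [h1]; cases cfun b4 ((n + 1) / 8) <;> rfl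
    · rw [h2]; cases cfun b4 ((n + 2) / 8) <;> decide
  · have e1 : (n + 1) % 16 = 12 := by omega
    have e2 : (n + 2) % 16 = 13 := by omega
    rw [hr] at h0; rw [e1] at h1; rw [e2] at h2
    refine ⟨?_, ?_, ?_⟩
    · rw [h0]; cases cfun b4 (n / 8) <;> rfl
    · rw [h1]; cases cfun b4 ((n + 1) / 8) <;> rfl
    · rw [h2]; cases cfun b4 ((n + 2) / 8) <;> decide

lemma markerFwd (n : ℕ) (h0 : xw b4 n = 0) (h1 : xw b4 (n + 1) = 1)
    (h2 : xw b4 (n + 2) ≠ 0) : n % 8 = 3 := by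
  have m0 := hmaster n
  have m1 := hmaster (n + 1)
  have m2 := hmaster (n + 2)
  rw [m0] at h0; rw [m1] at h1; rw [m2] at h2
  have hlt : n % 16 < 16 := by omega
  set r := n % 16 with hr
  have e1 : (n + 1) % 16 = (r + 1) % 16 := by omega
  have e2 : (n + 2) % 16 = (r + 2) % 16 := by omega
  rw [e1] at h1; rw [e2] at h2
  have goal16 : r = 3 ∨ r = 11 := by
    by_contra hcon
    push_neg at hcon
    interval_cases r <;>
      first
        | (revert h0; cases cfun b4 (n / 8) <;> decide)
        | (revert h1; cases cfun b4 ((n + 1) / 8) <;> decide)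
        | (revert h2; cases cfun b4 ((n + 2) / 8) <;> decide)
        | omega
  omega

omit hmaster in
lemma zeroT : ∀ (r : Fin 16) (c : Bool), (T r.val c = 0) ↔ (T r.val false = 0) := by decide

lemma xzero (n : ℕ) : (xw b4 n = 0) ↔ (T (n % 16) false = 0) := by
  rw [hmaster n]
  exact zeroT ⟨n % 16, by omega⟩ _

end C3

-- decidable small-period checks
set_option maxRecDepth 40000 in
set_option maxHeartbeats 4000000 in
lemma small3dec : ∀ f : Fin 3 → Fin 3, ∃ r < 3, ∀ φ < 16, ∀ c : Fin 3 → Bool,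
    ∃ j < 4, f ⟨(r + j) % 3, Nat.mod_lt _ (by omega)⟩ ≠
      T ((φ + j) % 16) (c ⟨min ((φ + j) / 8) 2, by omega⟩) := by decide

set_option maxRecDepth 40000 in
set_option maxHeartbeats 4000000 in
lemma smallzdec4 : ∀ f : Fin 4 → Bool, ∃ r < 4, ∀ φ < 16,
    ∃ j < 4 + 1, (f ⟨(r + j) % 4, Nat.mod_lt _ (by omega)⟩ ≠ decide (T ((φ + j) % 16) false = 0)) := by decide

set_option maxRecDepth 40000 in
set_option maxHeartbeats 4000000 in
lemma smallzdec5 : ∀ f : Fin 5 → Bool, ∃ r < 5, ∀ φ < 16,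
    ∃ j < 5 + 1, (f ⟨(r + j) % 5, Nat.mod_lt _ (by omega)⟩ ≠ decide (T ((φ + j) % 16) false = 0)) := by decide

set_option maxRecDepth 40000 in
set_option maxHeartbeats 4000000 in
lemma smallzdec6 : ∀ f : Fin 6 → Bool, ∃ r < 6, ∀ φ < 16,
    ∃ j < 6 + 1, (f ⟨(r + j) % 6, Nat.mod_lt _ (by omega)⟩ ≠ decide (T ((φ + j) % 16) false = 0)) := by decide

set_option maxRecDepth 40000 in
set_option maxHeartbeats 4000000 in
lemma smallzdec7 : ∀ f : Fin 7 → Bool, ∃ r < 7, ∀ φ < 16,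
    ∃ j < 7 + 1, (f ⟨(r + j) % 7, Nat.mod_lt _ (by omega)⟩ ≠ decide (T ((φ + j) % 16) false = 0)) := by decide

set_option maxRecDepth 40000 in
set_option maxHeartbeats 4000000 in
lemma smallzdec8 : ∀ f : Fin 8 → Bool, ∃ r < 8, ∀ φ < 16,
    ∃ j < 8 + 1, (f ⟨(r + j) % 8, Nat.mod_lt _ (by omega)⟩ ≠ decide (T ((φ + j) % 16) false = 0)) := by decide

set_option maxRecDepth 40000 in
set_option maxHeartbeats 4000000 in
lemma smallzdec9 : ∀ f : Fin 9 → Bool, ∃ r < 9, ∀ φ < 16,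
    ∃ j < 9 + 1, (f ⟨(r + j) % 9, Nat.mod_lt _ (by omega)⟩ ≠ decide (T ((φ + j) % 16) false = 0)) := by decide

lemma smallzdec (p : ℕ) (h1 : 4 ≤ p) (h2 : p ≤ 9) :
    ∀ f : Fin p → Bool, ∃ r < p, ∀ φ < 16,
    ∃ j < p + 1, (f ⟨(r + j) % p, Nat.mod_lt _ (by omega)⟩ ≠ decide (T ((φ + j) % 16) false = 0)) := by
  interval_cases p
  · exact fun f => (by obtain ⟨r, hr, hh⟩ := smallzdec4 f; exact ⟨r, hr, hh⟩)
  · exact fun f => (by obtain ⟨r, hr, hh⟩ := smallzdec5 f; exact ⟨r, hr, hh⟩)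
  · exact fun f => (by obtain ⟨r, hr, hh⟩ := smallzdec6 f; exact ⟨r, hr, hh⟩)
  · exact fun f => (by obtain ⟨r, hr, hh⟩ := smallzdec7 f; exact ⟨r, hr, hh⟩)
  · exact fun f => (by obtain ⟨r, hr, hh⟩ := smallzdec8 f; exact ⟨r, hr, hh⟩)
  · exact fun f => (by obtain ⟨r, hr, hh⟩ := smallzdec9 f; exact ⟨r, hr, hh⟩)

-- continued: small kill
section SmallKill
variable {b4 : ℕ → Fin 4}
  (hmaster : ∀ s : ℕ, xw b4 s = T (s % 16) (cfun b4 (s / 8)))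
include hmaster

lemma smallkill (p : ℕ) (hp3 : 3 ≤ p) (hp9 : p ≤ 9) (Y : ℕ → Fin 3)
    (hper : ∀ n, Y (n + p) = Y n)
    (hocc : ∀ r, ∃ n, ∀ j < p + 1, Y (r + j) = xw b4 (n + j)) : False := by
  have hp0 : 0 < p := by omega
  have hmod : ∀ n, Y n = Y (n % p) := by
    intro n
    induction n using Nat.strong_induction_on with
    | _ n IH =>
      rcases lt_or_ge n p with h | h
      · rw [Nat.mod_eq_of_lt h]
      · have h1 : n - p + p = n := by omega
        have h2 : Y (n - p) = Y ((n - p) % p) := IH (n - p) (by omega)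
        rw [← h1, hper, h2, Nat.add_mod_right]
  rcases Nat.eq_or_lt_of_le hp3 with hp | hp4
  · -- p = 3 : full letter check
    obtain rfl : p = 3 := hp.symm
    obtain ⟨r, hr, hcheck⟩ := small3dec (fun k => Y k.val)
    obtain ⟨n, hn⟩ := hocc r
    have hchk := hcheck (n % 16) (by omega) (fun i => cfun b4 (2 * (n / 16) + i.val))
    obtain ⟨j, hj, hne⟩ := hchk
    apply hne
    simp only []
    have h1 : Y ((r + j) % 3) = Y (r + j) := (hmod (r + j)).symm
    rw [h1, hn j (by omega), hmaster (n + j)]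
    have e1 : (n + j) % 16 = (n % 16 + j) % 16 := by omega
    have e2 : (n + j) / 8 = 2 * (n / 16) + min ((n % 16 + j) / 8) 2 := by omega
    rw [e1, e2]
  · -- 4 ≤ p : zero pattern check
    have hp4' : 4 ≤ p := by omega
    obtain ⟨r, hr, hcheck⟩ := smallzdec p hp4' hp9 (fun k => decide (Y k.val = 0))
    obtain ⟨n, hn⟩ := hocc r
    have := hcheck (n % 16) (by omega)
    obtain ⟨j, hj, hne⟩ := this
    apply hne
    have h1 : Y ((r + j) % p) = Y (r + j) := (hmod (r + j)).symm
    simp only [h1]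
    have h2 : Y (r + j) = xw b4 (n + j) := hn j hj
    rw [h2]
    have h3 : (xw b4 (n + j) = 0) ↔ (T ((n % 16 + j) % 16) false = 0) := by
      rw [xzero hmaster (n + j), mod16_add]
    rw [decide_eq_decide.mpr h3]

end SmallKill

/-- inverse of mb4 on valid pairs -/
def dec2 : Fin 4 → Fin 4 → Fin 4 := fun a b =>
  if a = 0 then (if b = 1 then 0 else 2) else (if b = 1 then 1 else 3)

lemma dec2_valid : ∀ a b : Fin 4, a.val % 2 = 0 → b.val % 2 = 1 →
    mb4 (dec2 a b) = [a, b] := by decide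

lemma dec2_par : ∀ a b : Fin 4, a.val % 2 = 0 → (dec2 a b).val % 2 = a.val / 2 := by decide

lemma mb4snd : ∀ u v : Fin 4, (mb4 u).getD 1 0 = (mb4 v).getD 1 0 →
    u.val % 2 = v.val % 2 → u = v := by decide

section BDesc
variable {b4 : ℕ → Fin 4} (hfix : ∀ n, [b4 (2 * n), b4 (2 * n + 1)] = mb4 (b4 n))
include hfix

lemma b4ev' (n : ℕ) : b4 (2 * n) = (mb4 (b4 n)).getD 0 0 := by
  have := congrArg (fun l => l.getD 0 0) (hfix n); simpa using this

lemma b4od' (n : ℕ) : b4 (2 * n + 1) = (mb4 (b4 n)).getD 1 0 := by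
  have := congrArg (fun l => l.getD 1 0) (hfix n); simpa using this

lemma b4parity' (n : ℕ) : (b4 n).val % 2 = n % 2 := by
  obtain ⟨k, rfl | rfl⟩ := Nat.even_or_odd' n
  · rw [b4ev' hfix k]
    rcases fin4cases (b4 k) with h | h | h | h <;> rw [h] <;> simp [mb4] <;> omega
  · rw [b4od' hfix k]
    rcases fin4cases (b4 k) with h | h | h | h <;> rw [h] <;> simp [mb4] <;> omega

lemma b4even' (k : ℕ) : b4 (2 * k) = if k % 2 = 0 then 0 else 2 := by
  have hp := b4parity' hfix k
  rw [b4ev' hfix k]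
  rcases fin4cases (b4 k) with h | h | h | h <;> rw [h] at hp ⊢ <;> simp [mb4] at hp ⊢
  · omega
  · omega
  · omega
  · omega

lemma bdec (e : ℕ) : dec2 (b4 (2 * e)) (b4 (2 * e + 1)) = b4 e := by
  rw [b4ev' hfix e, b4od' hfix e]
  rcases fin4cases (b4 e) with h | h | h | h <;> rw [h] <;> decide

/-- the b4 descent : no periodic word has all its (p+1)-windows as factors of b4 -/
lemma bdesc : ∀ p, 1 ≤ p → ∀ C : ℕ → Fin 4, (∀ n, C (n + p) = C n) →
    (∀ r, IsFactorOfInf (win C r (p + 1)) b4) → False := by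
  intro p
  induction p using Nat.strong_induction_on with
  | _ p IH =>
    intro hp C hper hwin
    have hocc : ∀ r, ∃ i, ∀ j < p + 1, C (r + j) = b4 (i + j) := by
      intro r; exact factor_win_iff.mp (hwin r)
    -- parity alternation of C
    have hCp : ∀ r, (C (r + 1)).val % 2 = ((C r).val + 1) % 2 := by
      intro r
      obtain ⟨i, hi⟩ := hocc r
      have h0 : C r = b4 i := by have := hi 0 (by omega); simpa using this
      have h1 : C (r + 1) = b4 (i + 1) := hi 1 (by omega)
      rw [h0, h1]
      have e1 := b4parity' hfix i
      have e2 := b4parity' hfix (i + 1)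
      omega
    have hCalt : ∀ n, (C n).val % 2 = ((C 0).val + n) % 2 := by
      intro n
      induction n with
      | zero => simp
      | succ n IHn => have := hCp n; omega
    have hpeven : p % 2 = 0 := by
      have h1 := hCalt p
      have h2 : C (0 + p) = C 0 := hper 0
      rw [Nat.zero_add] at h2
      rw [h2] at h1
      omega
    set q := p / 2 with hq
    have hq1 : 1 ≤ q := by omega
    have hp2q : p = 2 * q := by omega
    -- aligned word Q
    set δ := (C 0).val % 2 with hδ
    set Q : ℕ → Fin 4 := fun n => C (n + δ) with hQ
    have hQper : ∀ n, Q (n + p) = Q n := by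
      intro n
      show C (n + p + δ) = C (n + δ)
      rw [show n + p + δ = (n + δ) + p by omega, hper]
    have hQocc : ∀ r, ∃ i, ∀ j < p + 1, Q (r + j) = b4 (i + j) := by
      intro r
      obtain ⟨i, hi⟩ := hocc (r + δ)
      exact ⟨i, fun j hj => by
        show C (r + j + δ) = b4 (i + j)
        rw [show r + j + δ = (r + δ) + j by omega]; exact hi j hj⟩
    have hQpar : ∀ n, (Q n).val % 2 = n % 2 := by
      intro n
      show (C (n + δ)).val % 2 = n % 2
      rw [hCalt (n + δ)]
      have : (C 0).val % 2 = δ := rfl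
      omega
    -- 0/2 alternation of even positions of Q
    have h02 : ∀ k, (Q (2 * k)).val / 2 + (Q (2 * k + 2)).val / 2 = 1 := by
      intro k
      obtain ⟨i, hi⟩ := hQocc (2 * k)
      have h0 : Q (2 * k) = b4 i := by have := hi 0 (by omega); simpa using this
      have h2 : Q (2 * k + 2) = b4 (i + 2) := hi 2 (by omega)
      have hie : i % 2 = 0 := by
        have := hQpar (2 * k)
        rw [h0, b4parity' hfix] at this
        omega
      obtain ⟨e, rfl⟩ : ∃ e, i = 2 * e := ⟨i / 2, by omega⟩
      have e2 : 2 * e + 2 = 2 * (e + 1) := by ring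
      rw [h0, h2, e2, b4even' hfix, b4even' hfix]
      rcases Nat.even_or_odd e with ⟨u, hu⟩ | ⟨u, hu⟩
      · rw [if_pos (by omega), if_neg (by omega)]; decide
      · rw [if_neg (by omega), if_pos (by omega)]; decide
    -- decoded word
    set C' : ℕ → Fin 4 := fun k => dec2 (Q (2 * k)) (Q (2 * k + 1)) with hC'
    have hC'per : ∀ n, C' (n + q) = C' n := by
      intro n
      show dec2 (Q (2 * (n + q))) (Q (2 * (n + q) + 1)) = dec2 (Q (2 * n)) (Q (2 * n + 1))
      rw [show 2 * (n + q) = 2 * n + p by omega, show 2 * n + p + 1 = (2 * n + 1) + p by omega,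
        hQper, hQper]
    -- validity of pairs
    have hvalid : ∀ k, mb4 (C' k) = [Q (2 * k), Q (2 * k + 1)] := by
      intro k
      exact dec2_valid _ _ (by rw [hQpar]; omega) (by rw [hQpar]; omega)
    -- windows of C' are factors of b4
    have hwin' : ∀ r, IsFactorOfInf (win C' r (q + 1)) b4 := by
      intro r
      obtain ⟨i, hi⟩ := hQocc (2 * r + p + 1)
      -- i is odd
      have hipar : i % 2 = 1 := by
        have h0 : Q (2 * r + p + 1) = b4 i := by have := hi 0 (by omega); simpa using this
        have := hQpar (2 * r + p + 1)
        rw [h0, b4parity' hfix] at this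
        omega
      obtain ⟨w, rfl⟩ : ∃ w, i = 2 * w + 1 := ⟨i / 2, by omega⟩
      -- main decode : for 1 ≤ k ≤ q, b4 (w + k) = C' (r + k)
      have hmain : ∀ k, 1 ≤ k → k ≤ q → b4 (w + k) = C' (r + k) := by
        intro k hk1 hkq
        have ha : b4 (2 * (w + k)) = Q (2 * (r + k) + p) := by
          have := hi (2 * k - 1) (by omega)
          rw [show 2 * w + 1 + (2 * k - 1) = 2 * (w + k) by omega] at this
          rw [← this]
          congr 1
          omega
        have hb : b4 (2 * (w + k) + 1) = Q (2 * (r + k) + 1 + p) := by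
          have := hi (2 * k) (by omega)
          rw [show 2 * w + 1 + 2 * k = 2 * (w + k) + 1 by omega] at this
          rw [← this]
          congr 1
          omega
        rw [← bdec hfix (w + k), ha, hb, hQper, hQper]
      -- seam : b4 w = C' r
      have hseam : b4 w = C' r := by
        apply mb4snd
        · -- second letters agree
          have h0 : Q (2 * r + p + 1) = b4 (2 * w + 1) := by
            have := hi 0 (by omega); simpa using this
          rw [← b4od' hfix w, ← h0]
          have hv := hvalid r
          have : (mb4 (C' r)).getD 1 0 = Q (2 * r + 1) := by rw [hv]; rfl
          rw [this]
          rw [show 2 * r + p + 1 = (2 * r + 1) + p by omega, hQper]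
        · -- parities agree
          have hCr1 : C' (r + 1) = b4 (w + 1) := (hmain 1 (by omega) hq1).symm
          have hpar1 : (C' (r + 1)).val % 2 = (w + 1) % 2 := by
            rw [hCr1, b4parity' hfix]
          have hd1 : (C' (r + 1)).val % 2 = (Q (2 * (r + 1))).val / 2 :=
            dec2_par _ _ (by rw [hQpar]; omega)
          have hd0 : (C' r).val % 2 = (Q (2 * r)).val / 2 :=
            dec2_par _ _ (by rw [hQpar]; omega)
          have halt := h02 r
          rw [show 2 * r + 2 = 2 * (r + 1) by omega] at halt
          rw [b4parity' hfix, hd0]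
          omega
      -- combine
      rw [factor_win_iff]
      refine ⟨w, ?_⟩
      intro j hj
      rcases Nat.eq_zero_or_pos j with rfl | hjpos
      · simpa using hseam.symm
      · rw [← hmain j hjpos (by omega)]
    exact IH q (by omega) hq1 C' hC'per hwin'

end BDesc


/-- decode a block from its length-3 suffix -/
def decS : Fin 3 → Fin 3 → Fin 3 → Fin 4 := fun a b c =>
  if a = 0 ∧ b = 1 ∧ c = 0 then 0
  else if a = 1 ∧ b = 2 ∧ c = 2 then 1
  else if a = 2 ∧ b = 0 ∧ c = 0 then 2
  else 3

lemma decS_spec : ∀ v : Fin 4,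
    decS ((g3 v).getD 1 0) ((g3 v).getD 2 0) ((g3 v).getD 3 0) = v := by decide

lemma g3snd : ∀ u v : Fin 4, (g3 u).getD 1 0 = (g3 v).getD 1 0 →
    u.val % 2 = v.val % 2 → u = v := by decide

lemma xval' {b4 : ℕ → Fin 4} (a δ : ℕ) (hδ : δ < 4) :
    xw b4 (4 * a + δ) = (g3 (b4 a)).getD δ 0 := by
  have h1 : (4 * a + δ) / 4 = a := by omega
  have h2 : (4 * a + δ) % 4 = δ := by omega
  unfold xw
  rw [h1, h2]

section GDesc
variable {b4 : ℕ → Fin 4}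
  (hpar : ∀ n, (b4 n).val % 2 = n % 2)
  (hmFwd : ∀ n, xw b4 n = 0 → xw b4 (n + 1) = 1 → xw b4 (n + 2) ≠ 0 → n % 8 = 3)
  (hmBwd : ∀ n, n % 8 = 3 → xw b4 n = 0 ∧ xw b4 (n + 1) = 1 ∧ xw b4 (n + 2) ≠ 0)
include hpar hmFwd hmBwd

lemma gdesc (p : ℕ) (hp : 10 ≤ p) (Y : ℕ → Fin 3)
    (hper : ∀ n, Y (n + p) = Y n)
    (hocc : ∀ r, ∃ n, ∀ j < p + 1, Y (r + j) = xw b4 (n + j)) :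
    ∃ q, 1 ≤ q ∧ ∃ C : ℕ → Fin 4, (∀ n, C (n + q) = C n) ∧
      ∀ r, IsFactorOfInf (win C r (q + 1)) b4 := by
  classical
  -- Y-marker predicate
  set MY : ℕ → Prop := fun s => Y s = 0 ∧ Y (s + 1) = 1 ∧ ¬ (Y (s + 2) = 0) with hMY
  have hMex : ∀ r, ∃ s, r ≤ s ∧ s ≤ r + 7 ∧ MY s := by
    intro r
    obtain ⟨n, hn⟩ := hocc r
    set j0 := (11 - n % 8) % 8 with hj0
    have hj0lt : j0 < 8 := by omega
    have hj08 : (n + j0) % 8 = 3 := by omega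
    obtain ⟨m0, m1, m2⟩ := hmBwd (n + j0) hj08
    refine ⟨r + j0, by omega, by omega, ?_, ?_, ?_⟩
    · rw [hn j0 (by omega)]; exact m0
    · rw [show r + j0 + 1 = r + (j0 + 1) by omega, hn (j0 + 1) (by omega),
        show n + (j0 + 1) = n + j0 + 1 by omega]
      exact m1
    · rw [show r + j0 + 2 = r + (j0 + 2) by omega, hn (j0 + 2) (by omega),
        show n + (j0 + 2) = n + j0 + 2 by omega]
      exact m2
  have H : ∀ r, ∃ s, r ≤ s ∧ MY s := by
    intro r; obtain ⟨s, h1, _, h3⟩ := hMex r; exact ⟨s, h1, h3⟩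
  set sm : ℕ → ℕ := fun r => Nat.find (H r) with hsm
  have sm_le : ∀ r, r ≤ sm r := fun r => (Nat.find_spec (H r)).1
  have sm_my : ∀ r, MY (sm r) := fun r => (Nat.find_spec (H r)).2
  have sm_min : ∀ r s, r ≤ s → MY s → sm r ≤ s := by
    intro r s h1 h2; exact Nat.find_min' (H r) ⟨h1, h2⟩
  have sm_le7 : ∀ r, sm r ≤ r + 7 := by
    intro r; obtain ⟨s, h1, h2, h3⟩ := hMex r; exact le_trans (sm_min r s h1 h3) h2
  -- marker visibility forces phase
  have hMvis : ∀ r s n, r ≤ s → s + 2 ≤ r + p → MY s →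
      (∀ j < p + 1, Y (r + j) = xw b4 (n + j)) → (n + (s - r)) % 8 = 3 := by
    intro r s n h1 h2 hM hn
    obtain ⟨m0, m1, m2⟩ := hM
    apply hmFwd
    · rw [← hn (s - r) (by omega), show r + (s - r) = s by omega]; exact m0
    · rw [show n + (s - r) + 1 = n + (s - r + 1) by omega, ← hn (s - r + 1) (by omega),
        show r + (s - r + 1) = s + 1 by omega]
      exact m1
    · rw [show n + (s - r) + 2 = n + (s - r + 2) by omega, ← hn (s - r + 2) (by omega),
        show r + (s - r + 2) = s + 2 by omega]
      exact m2
  set φ : ℕ → ℕ := fun r => (11 - (sm r - r)) % 8 with hφ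
  have φlt : ∀ r, φ r < 8 := fun r => Nat.mod_lt _ (by omega)
  have hφocc : ∀ r n, (∀ j < p + 1, Y (r + j) = xw b4 (n + j)) → n % 8 = φ r := by
    intro r n hn
    have hd : sm r - r ≤ 7 := by have := sm_le7 r; omega
    have h3 := hMvis r (sm r) n (sm_le r) (by have := sm_le7 r; omega) (sm_my r) hn
    have : (n + (sm r - r)) % 8 = 3 := h3
    simp only [hφ]
    omega
  have hsucc : ∀ r, φ (r + 1) = (φ r + 1) % 8 := by
    intro r
    obtain ⟨n, hn⟩ := hocc r
    have hn8 : n % 8 = φ r := hφocc r n hn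
    rcases Nat.lt_or_ge r (sm r) with hcase | hcase
    · -- sm (r+1) = sm r
      have he : sm (r + 1) = sm r := by
        apply le_antisymm
        · exact sm_min (r + 1) (sm r) (by omega) (sm_my r)
        · exact sm_min r (sm (r + 1)) (by have := sm_le (r + 1); omega) (sm_my (r + 1))
      have hd : sm r - r ≤ 7 := by have := sm_le7 r; omega
      simp only [hφ, he]
      omega
    · -- sm r = r
      have hsmr : sm r = r := le_antisymm hcase (sm_le r)
      have hφr : φ r = 3 := by simp only [hφ, hsmr]; omega
      have hn3 : n % 8 = 3 := by rw [hn8, hφr]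
      -- marker at r + 8
      have hM8 : MY (r + 8) := by
        obtain ⟨m0, m1, m2⟩ := hmBwd (n + 8) (by omega)
        refine ⟨?_, ?_, ?_⟩
        · rw [hn 8 (by omega)]; exact m0
        · rw [show r + 8 + 1 = r + 9 by omega, hn 9 (by omega),
            show n + 9 = n + 8 + 1 by omega]
          exact m1
        · rw [show r + 8 + 2 = r + 10 by omega, hn 10 (by omega),
            show n + 10 = n + 8 + 2 by omega]
          exact m2
      have hle8 : sm (r + 1) ≤ r + 8 := sm_min (r + 1) (r + 8) (by omega) hM8
      have hge1 : r + 1 ≤ sm (r + 1) := sm_le (r + 1)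
      have hvis : (n + (sm (r + 1) - r)) % 8 = 3 :=
        hMvis r (sm (r + 1)) n (by omega) (by omega) (sm_my (r + 1)) hn
      have : sm (r + 1) = r + 8 := by omega
      simp only [hφ, this, hφr]
      omega
  have hiter : ∀ r k, φ (r + k) = (φ r + k) % 8 := by
    intro r k
    induction k with
    | zero => simp [Nat.mod_eq_of_lt (φlt r)]
    | succ k IHk =>
      rw [show r + (k + 1) = (r + k) + 1 by omega, hsucc (r + k), IHk]
      omega
  -- markers are periodic, so is sm, so p ≡ 0 mod 8
  have hMYper : ∀ s, MY (s + p) ↔ MY s := by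
    intro s
    constructor
    · rintro ⟨m0, m1, m2⟩
      rw [hper s] at m0
      rw [show s + p + 1 = (s + 1) + p by omega, hper (s + 1)] at m1
      rw [show s + p + 2 = (s + 2) + p by omega, hper (s + 2)] at m2
      exact ⟨m0, m1, m2⟩
    · rintro ⟨m0, m1, m2⟩
      refine ⟨?_, ?_, ?_⟩
      · rw [hper s]; exact m0
      · rw [show s + p + 1 = (s + 1) + p by omega, hper (s + 1)]; exact m1
      · rw [show s + p + 2 = (s + 2) + p by omega, hper (s + 2)]; exact m2
  have hsmper : sm p = sm 0 + p := by
    apply le_antisymm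
    · exact sm_min p (sm 0 + p) (by have := sm_le 0; omega) ((hMYper (sm 0)).mpr (sm_my 0))
    · have h1 : p ≤ sm p := sm_le p
      have h2 : MY (sm p - p) := by
        have : MY ((sm p - p) + p) := by rw [show (sm p - p) + p = sm p by omega]; exact sm_my p
        exact (hMYper _).mp this
      have := sm_min 0 (sm p - p) (by omega) h2
      omega
  have hp8 : p % 8 = 0 := by
    have h1 : φ p = (φ 0 + p) % 8 := by
      have := hiter 0 p; rw [show 0 + p = p by omega] at this; exact this
    have h2 : φ p = φ 0 := by
      simp only [hφ, hsmper]
      have : sm 0 + p - p = sm 0 - 0 + 0 := by omega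
      omega
    have := φlt 0
    omega
  -- set up the decoding
  set q := p / 4 with hqdef
  have hq4 : p = 4 * q := by omega
  have hqeven : q % 2 = 0 := by omega
  have hq1 : 1 ≤ q := by omega
  set r0 := (9 - φ 0) % 8 with hr0
  have hφr0 : φ r0 = 1 := by
    have h1 : φ (0 + r0) = (φ 0 + r0) % 8 := hiter 0 r0
    rw [show 0 + r0 = r0 by omega] at h1
    have := φlt 0
    rw [h1]
    omega
  set C : ℕ → Fin 4 := fun k =>
    decS (Y (r0 + 4 * k)) (Y (r0 + 4 * k + 1)) (Y (r0 + 4 * k + 2)) with hC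
  have hCper : ∀ n, C (n + q) = C n := by
    intro n
    simp only [hC]
    rw [show r0 + 4 * (n + q) = (r0 + 4 * n) + p by omega]
    rw [show r0 + 4 * n + p + 1 = (r0 + 4 * n + 1) + p by omega,
      show r0 + 4 * n + p + 2 = (r0 + 4 * n + 2) + p by omega,
      hper, hper, hper]
  refine ⟨q, hq1, C, hCper, ?_⟩
  intro m
  obtain ⟨n, hn⟩ := hocc (r0 + 4 * m)
  have hn8 : n % 8 = (1 + 4 * m) % 8 := by
    have h1 := hφocc (r0 + 4 * m) n hn
    have h2 : φ (r0 + 4 * m) = (φ r0 + 4 * m) % 8 := hiter r0 (4 * m)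
    rw [h1, h2, hφr0]
  obtain ⟨a, hna, ham⟩ : ∃ a, n = 4 * a + 1 ∧ a % 2 = m % 2 := ⟨n / 4, by omega, by omega⟩
  -- block decodes
  have hblk : ∀ k, k < q → C (m + k) = b4 (a + k) := by
    intro k hk
    have e0 : Y (r0 + 4 * (m + k)) = (g3 (b4 (a + k))).getD 1 0 := by
      rw [show r0 + 4 * (m + k) = (r0 + 4 * m) + 4 * k by omega, hn (4 * k) (by omega),
        show n + 4 * k = 4 * (a + k) + 1 by omega, xval' (a + k) 1 (by omega)]
    have e1 : Y (r0 + 4 * (m + k) + 1) = (g3 (b4 (a + k))).getD 2 0 := by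
      rw [show r0 + 4 * (m + k) + 1 = (r0 + 4 * m) + (4 * k + 1) by omega,
        hn (4 * k + 1) (by omega),
        show n + (4 * k + 1) = 4 * (a + k) + 2 by omega, xval' (a + k) 2 (by omega)]
    have e2 : Y (r0 + 4 * (m + k) + 2) = (g3 (b4 (a + k))).getD 3 0 := by
      rw [show r0 + 4 * (m + k) + 2 = (r0 + 4 * m) + (4 * k + 2) by omega,
        hn (4 * k + 2) (by omega),
        show n + (4 * k + 2) = 4 * (a + k) + 3 by omega, xval' (a + k) 3 (by omega)]
    simp only [hC]
    rw [e0, e1, e2]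
    exact decS_spec (b4 (a + k))
  -- tail : b4 (a + q) = b4 a
  have htail : b4 (a + q) = b4 a := by
    apply g3snd
    · have e1 : (g3 (b4 (a + q))).getD 1 0 = Y (r0 + 4 * m + p) := by
        rw [show r0 + 4 * m + p = (r0 + 4 * m) + p by omega, hn p (by omega),
          show n + p = 4 * (a + q) + 1 by omega, xval' (a + q) 1 (by omega)]
      have e2 : (g3 (b4 a)).getD 1 0 = Y (r0 + 4 * m) := by
        have := hn 0 (by omega)
        rw [show r0 + 4 * m + 0 = r0 + 4 * m by omega] at this
        rw [this, show n + 0 = 4 * a + 1 by omega, xval' a 1 (by omega)]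
      rw [e1, e2, show r0 + 4 * m + p = (r0 + 4 * m) + p by omega, hper]
    · rw [hpar (a + q), hpar a]
      omega
  rw [factor_win_iff]
  refine ⟨a, ?_⟩
  intro j hj
  rcases Nat.lt_or_ge j q with hjq | hjq
  · exact hblk j hjq
  · have hjq' : j = q := by omega
    subst hjq'
    rw [hCper m, htail]
    have h0 := hblk 0 (by omega)
    simpa using h0
end GDesc


/-- If `b₄` is the fixed point starting with `0` of the morphism
`0 ↦ 01, 1 ↦ 21, 2 ↦ 03, 3 ↦ 23`, then the infinite ternary word `g₃(b₄)`
avoids every circular formula `C_i` with `i ≥ 3`. -/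
theorem stmt_7 (b4 : ℕ → Fin 4) (hb0 : b4 0 = 0)
    (hfix : ∀ n, [b4 (2 * n), b4 (2 * n + 1)] = mb4 (b4 n)) :
    ∀ i, 3 ≤ i →
      ¬ ∃ h : ℕ → List (Fin 3),
          CircOcc i h (fun n => (g3 (b4 (n / 4))).getD (n % 4) 0) := by
  intro i hi
  rintro ⟨h, hocc⟩
  have hocc' : CircOcc i h (xw b4) := hocc
  obtain ⟨p, hp3, Y, hper, hwin⟩ := claimA hi h hocc'
  have hmaster := master hfix
  have hoccfun : ∀ r, ∃ n, ∀ j < p + 1, Y (r + j) = xw b4 (n + j) := by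
    intro r
    exact factor_win_iff.mp (hwin r)
  rcases le_or_gt p 9 with h9 | h10
  · exact smallkill hmaster p hp3 h9 Y hper hoccfun
  · obtain ⟨q, hq1, C, hCper, hCwin⟩ :=
      gdesc (b4parity' hfix) (markerFwd hmaster) (markerBwd hmaster)
        p (by omega) Y hper hoccfun
    exact bdesc hfix q hq1 C hCper hCwin
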